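/- Let A be a self-adjoint operator with domain D(A) on a Hilbert space H, and let U be a unitary operator on H of class C¹(A) and of class C¹(A²), where D(A²) = {ψ ∈ D(A) : Aψ ∈ D(A)}. Then there exists a constant C > 0 such that for all φ, ψ ∈ D(A): |⟨U*(A(Uφ)) − Aφ, Aψ⟩ + ⟨Aφ, U*(A(Uψ)) − Aψ⟩| ≤ C·‖φ‖·‖ψ‖, and likewise |⟨Aφ − U(A(U*φ)), Aψ⟩ + ⟨Aφ, Aψ − U(A(U*ψ))⟩| ≤ C·‖φ‖·‖ψ‖. -/

import Mathlib

open scoped ComplexInnerProductSpace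

namespace Stmt14Aux

variable {H : Type*} [NormedAddCommGroup H] [InnerProductSpace ℂ H] [CompleteSpace H]
variable {A : H →ₗ.[ℂ] H}

theorem sym (hdense : Dense (A.domain : Set H)) (hsa : A.adjoint = A) :
    ∀ x y : A.domain, ⟪A x, (y : H)⟫ = ⟪(x : H), A y⟫ := by
  have h := LinearPMap.adjoint_isFormalAdjoint (T := A) hdense
  rw [hsa] at h
  exact h

theorem mem_apply (hdense : Dense (A.domain : Set H)) (hsa : A.adjoint = A) (v z : H)
    (h : ∀ x : A.domain, ⟪A x, v⟫ = ⟪(x : H), z⟫) :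
    ∃ hv : v ∈ A.domain, A ⟨v, hv⟩ = z := by
  have hv' : v ∈ A.adjoint.domain :=
    LinearPMap.mem_adjoint_domain_of_exists v
      ⟨z, fun x => by rw [← inner_conj_symm, ← h x, inner_conj_symm]⟩
  have hv : v ∈ A.domain := hsa ▸ hv'
  refine ⟨hv, hdense.eq_of_inner_left ℂ fun x hx => ?_⟩
  change ⟪_, ((⟨x, hx⟩ : A.domain) : H)⟫ = ⟪_, ((⟨x, hx⟩ : A.domain) : H)⟫
  rw [sym hdense hsa ⟨v, hv⟩ ⟨x, hx⟩, ← inner_conj_symm, h ⟨x, hx⟩, inner_conj_symm]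

theorem normsq (hdense : Dense (A.domain : Set H)) (hsa : A.adjoint = A) (t : ℝ) (x : A.domain) :
    ‖A x + ((t : ℂ) * Complex.I) • (x : H)‖ ^ 2 = ‖A x‖ ^ 2 + t ^ 2 * ‖(x : H)‖ ^ 2 := by
  have hre : (⟪A x, (x : H)⟫).im = 0 := by
    rw [← Complex.conj_eq_iff_im, inner_conj_symm, sym hdense hsa]
  rw [@norm_add_sq ℂ]
  have h1 : RCLike.re ⟪A x, ((t : ℂ) * Complex.I) • (x : H)⟫ = 0 := by
    rw [inner_smul_right]
    simp [RCLike.re_to_complex, Complex.mul_re, Complex.mul_im, hre]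
  have h2 : ‖((t : ℂ) * Complex.I) • (x : H)‖ ^ 2 = t ^ 2 * ‖(x : H)‖ ^ 2 := by
    rw [norm_smul]
    simp [mul_pow, sq_abs]
  rw [h1, h2]; ring

theorem sq_le' {a b : ℝ} (ha : 0 ≤ a) (hb : 0 ≤ b) (h : a ^ 2 ≤ b ^ 2) : a ≤ b := by nlinarith

/-- The operator `A + it` is surjective for `t > 0`. -/
theorem surj (hdense : Dense (A.domain : Set H)) (hsa : A.adjoint = A) (t : ℝ) (ht : 0 < t)
    (y : H) : ∃ x : A.domain, A x + ((t : ℂ) * Complex.I) • (x : H) = y := by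
  set c : ℂ := (t : ℂ) * Complex.I with hc
  set L : A.domain →ₗ[ℂ] H := A.toFun + c • A.domain.subtype with hL
  have hLa : ∀ x : A.domain, L x = A x + c • (x : H) := fun x => rfl
  set S : Submodule ℂ H := LinearMap.range L with hS
  -- closedness of S
  have hclosed : IsClosed (S : Set H) := by
    rw [← isSeqClosed_iff_isClosed]
    intro f y hf hfy
    have hg : ∀ n, ∃ x : A.domain, L x = f n := fun n => hf n
    choose g hg using hg
    have hdiff : ∀ m n : ℕ, t * ‖(g m : H) - (g n : H)‖ ≤ ‖f m - f n‖ ∧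
        ‖A (g m) - A (g n)‖ ≤ ‖f m - f n‖ := by
      intro m n
      have h1 : f m - f n = A (g m - g n) + c • ((g m - g n : A.domain) : H) := by
        rw [← hg m, ← hg n, ← map_sub]; rfl
      have h2 := normsq hdense hsa t (g m - g n)
      rw [← h1] at h2
      have h3 : ((g m - g n : A.domain) : H) = (g m : H) - (g n : H) := rfl
      have h4 : A (g m - g n) = A (g m) - A (g n) := map_sub _ _ _
      rw [h3, h4] at h2
      constructor
      · refine sq_le' (by positivity) (norm_nonneg _) ?_
        rw [mul_pow]; nlinarith [sq_nonneg ‖A (g m) - A (g n)‖]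
      · refine sq_le' (norm_nonneg _) (norm_nonneg _) ?_
        nlinarith [mul_nonneg (sq_nonneg t) (sq_nonneg ‖(g m : H) - (g n : H)‖)]
    have hcf : CauchySeq f := hfy.cauchySeq
    have hcg : CauchySeq fun n => (g n : H) := by
      rw [Metric.cauchySeq_iff] at hcf ⊢
      intro ε hε
      obtain ⟨N, hN⟩ := hcf (t * ε) (by positivity)
      refine ⟨N, fun m hm n hn => ?_⟩
      have := (hdiff m n).1
      have h5 := hN m hm n hn
      rw [dist_eq_norm] at h5 ⊢
      nlinarith
    have hcAg : CauchySeq fun n => A (g n) := by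
      rw [Metric.cauchySeq_iff] at hcf ⊢
      intro ε hε
      obtain ⟨N, hN⟩ := hcf ε hε
      refine ⟨N, fun m hm n hn => ?_⟩
      have := (hdiff m n).2
      have h5 := hN m hm n hn
      rw [dist_eq_norm] at h5 ⊢
      linarith
    obtain ⟨x, hx⟩ := cauchySeq_tendsto_of_complete hcg
    obtain ⟨w, hw⟩ := cauchySeq_tendsto_of_complete hcAg
    have hmem : ∃ hx' : x ∈ A.domain, A ⟨x, hx'⟩ = w := by
      refine mem_apply hdense hsa x w fun u => ?_
      have t1 : Filter.Tendsto (fun n => ⟪A u, (g n : H)⟫) Filter.atTop (nhds ⟪A u, x⟫) :=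
        Filter.Tendsto.inner tendsto_const_nhds hx
      have t2 : Filter.Tendsto (fun n => ⟪(u : H), A (g n)⟫) Filter.atTop
          (nhds ⟪(u : H), w⟫) := Filter.Tendsto.inner tendsto_const_nhds hw
      have heq : (fun n => ⟪A u, (g n : H)⟫) = fun n => ⟪(u : H), A (g n)⟫ := by
        funext n; exact sym hdense hsa u (g n)
      rw [heq] at t1
      exact tendsto_nhds_unique t1 t2
    obtain ⟨hx', hAx⟩ := hmem
    have hyval : y = w + c • x := by
      have tf : Filter.Tendsto f Filter.atTop (nhds (w + c • x)) := by
        have : f = fun n => A (g n) + c • ((g n : H)) := by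
          funext n; rw [← hg n]; rfl
        rw [this]
        exact Filter.Tendsto.add hw (Filter.Tendsto.const_smul hx c)
      exact tendsto_nhds_unique hfy tf
    exact ⟨⟨x, hx'⟩, by rw [hLa, hAx, hyval]⟩
  -- density of S
  have hdenseS : Sᗮ = ⊥ := by
    rw [Submodule.eq_bot_iff]
    intro v hv
    have hv' : ∀ x : A.domain, ⟪A x, v⟫ = ⟪(x : H), c • v⟫ := by
      intro x
      have h0 : ⟪(L x : H), v⟫ = 0 := (Submodule.mem_orthogonal S v).1 hv _ (LinearMap.mem_range_self L x)
      rw [hLa, inner_add_left, inner_smul_left] at h0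
      rw [inner_smul_right]
      have hcc : (starRingEnd ℂ) c = -c := by simp [hc]
      rw [hcc] at h0
      linear_combination h0
    obtain ⟨hvmem, hvval⟩ := mem_apply hdense hsa v (c • v) hv'
    have h6 := sym hdense hsa ⟨v, hvmem⟩ ⟨v, hvmem⟩
    rw [hvval] at h6
    simp only [inner_smul_left, inner_smul_right] at h6
    have hcc : (starRingEnd ℂ) c = -c := by simp [hc]
    rw [hcc] at h6
    have h7 : (2 : ℂ) * c * ⟪v, v⟫ = 0 := by linear_combination -h6
    have hc0 : c ≠ 0 := mul_ne_zero (by exact_mod_cast ht.ne') Complex.I_ne_zero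
    have : ⟪v, v⟫ = (0 : ℂ) := by
      rcases mul_eq_zero.mp h7 with h7 | h7
      · exact absurd h7 (mul_ne_zero two_ne_zero hc0)
      · exact h7
    exact inner_self_eq_zero.mp this
  have hStop : S = ⊤ := by
    have := Submodule.topologicalClosure_eq_top_iff.mpr hdenseS
    rwa [IsClosed.submodule_topologicalClosure_eq hclosed] at this
  have hy : y ∈ S := hStop ▸ Submodule.mem_top
  obtain ⟨x, hx⟩ := hy
  exact ⟨x, by rw [← hLa, hx]⟩


/-- Auxiliary: solutions of `(A + it)x = ξ` for `ξ ∈ D(A)`, with regularity and bounds. -/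
theorem res (hdense : Dense (A.domain : Set H)) (hsa : A.adjoint = A) (t : ℝ) (ht : 0 < t)
    (ξ : A.domain) :
    ∃ x ax : A.domain,
      (A x + ((t : ℂ) * Complex.I) • (x : H) = (ξ : H)) ∧
      ((ax : H) = A x) ∧
      (A ax + ((t : ℂ) * Complex.I) • (ax : H) = A ξ) ∧
      (t * ‖(x : H)‖ ≤ ‖(ξ : H)‖) ∧ (t * ‖(ax : H)‖ ≤ ‖A ξ‖) ∧ (‖A ax‖ ≤ ‖A ξ‖) := by
  set c : ℂ := (t : ℂ) * Complex.I with hc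
  obtain ⟨x, hx⟩ := surj hdense hsa t ht (ξ : H)
  have hsub : ((ξ - c • x : A.domain) : H) = (ξ : H) - c • (x : H) := rfl
  have hAsub : A (ξ - c • x) = A ξ - c • A x := by
    rw [LinearPMap.map_sub, LinearPMap.map_smul]
  have heq : A (ξ - c • x) + c • ((ξ - c • x : A.domain) : H) = A ξ := by
    rw [hAsub, hsub, ← hx]; module
  have hn1 := normsq hdense hsa t x
  rw [hx] at hn1
  have hn2 := normsq hdense hsa t (ξ - c • x)
  rw [heq] at hn2
  refine ⟨x, ξ - c • x, hx, ?_, heq, ?_, ?_, ?_⟩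
  · rw [hsub, ← hx]; module
  · refine sq_le' (by positivity) (norm_nonneg _) ?_
    rw [mul_pow]; nlinarith [sq_nonneg ‖A x‖]
  · refine sq_le' (by positivity) (norm_nonneg _) ?_
    rw [mul_pow]; nlinarith [sq_nonneg ‖A (ξ - c • x)‖]
  · refine sq_le' (norm_nonneg _) (norm_nonneg _) ?_
    nlinarith [mul_nonneg (sq_nonneg t) (sq_nonneg ‖((ξ - c • x : A.domain) : H)‖)]



/-- Essential self-adjointness of `A` on `D(A²)`: a form identity tested on `D(A²)`
extends to `D(A)`. -/
theorem aux_delta (ε a : ℝ) (hε : 0 < ε) (ha : 0 ≤ a) : ε / (2 * (a + 1)) * a ≤ ε / 2 := by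
  rw [div_mul_eq_mul_div, div_le_div_iff₀ (by positivity) two_pos]
  nlinarith

theorem aux_div (K t ε : ℝ) (hK : 0 ≤ K) (ht : 0 < t) (hε : 0 < ε) (h : K * (2 / ε) < t) :
    K / t ≤ ε / 2 := by
  rw [div_le_iff₀ ht]
  rw [mul_div_assoc'] at h
  have h2 : K * 2 < t * ε := (div_lt_iff₀ hε).mp h
  nlinarith

theorem core (hdense : Dense (A.domain : Set H)) (hsa : A.adjoint = A) {v z : H}
    (h : ∀ ψ : A.domain, A ψ ∈ A.domain → ⟪A ψ, v⟫ = ⟪(ψ : H), z⟫)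
    (η : A.domain) : ⟪A η, v⟫ = ⟪(η : H), z⟫ := by
  have key : ∀ ε > 0, ‖⟪A η, v⟫ - ⟪(η : H), z⟫‖ ≤ ε := by
    intro ε hε
    set δ := ε / (2 * (‖v‖ + 1)) with hδdef
    have hδ : 0 < δ := by positivity
    obtain ⟨u, humem, hud⟩ : ∃ u ∈ (A.domain : Set H), dist (A η) u < δ :=
      Metric.mem_closure_iff.mp (hdense (A η)) δ hδ
    set uel : A.domain := ⟨u, humem⟩ with huel
    obtain ⟨n, hn⟩ := exists_nat_gt (max 1 ((‖A uel‖ * ‖v‖ + ‖A η‖ * ‖z‖) * (2 / ε)))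
    set t : ℝ := (n : ℝ) with htdef
    have ht : 0 < t := lt_of_lt_of_le one_pos (le_of_lt (lt_of_le_of_lt (le_max_left _ _) hn))
    obtain ⟨x₁, ax₁, hx₁, hax₁coe, hax₁eq, hb1, hb2, hb3⟩ := res hdense hsa t ht η
    obtain ⟨x₂, ax₂, hx₂, hax₂coe, hax₂eq, hb1', hb2', hb3'⟩ := res hdense hsa t ht uel
    -- the difference d solves (A+it)d = Aη - u
    set d : A.domain := ax₁ - x₂ with hd
    have hx₂' : A x₂ + ((t : ℂ) * Complex.I) • (x₂ : H) = u := hx₂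
    have hdeq : A d + ((t : ℂ) * Complex.I) • (d : H) = A η - u := by
      have h1 : A d = A ax₁ - A x₂ := LinearPMap.map_sub _ _ _
      have h2 : (d : H) = (ax₁ : H) - (x₂ : H) := rfl
      rw [h1, h2, smul_sub, ← hax₁eq, ← hx₂']
      abel
    have hdnorm : ‖A d‖ ≤ δ := by
      have hn2 := normsq hdense hsa t d
      rw [hdeq] at hn2
      have hud' : ‖A η - u‖ < δ := by rwa [dist_eq_norm] at hud
      refine sq_le' (norm_nonneg _) (le_of_lt hδ) ?_
      nlinarith [mul_nonneg (sq_nonneg t) (sq_nonneg ‖(d : H)‖), norm_nonneg (A η - u)]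
    -- the regularized vector w = c • x₁
    set w : A.domain := ((t : ℂ) * Complex.I) • x₁ with hwdef
    have hAw : A w = ((t : ℂ) * Complex.I) • A x₁ := LinearPMap.map_smul _ _ _
    have hAx₁ : A x₁ = (ax₁ : H) := hax₁coe.symm
    have hAwmem : A w ∈ A.domain := by
      rw [hAw, hAx₁]
      exact A.domain.smul_mem _ ax₁.2
    have hQ := h w hAwmem
    have hgap : A w - A η = -(A ax₁) := by
      rw [hAw, hAx₁, ← hax₁eq]; abel
    have hwgap : (w : H) - (η : H) = -(A x₁) := by
      have h2 : (w : H) = ((t : ℂ) * Complex.I) • (x₁ : H) := rfl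
      rw [h2, ← hx₁]; abel
    -- bounds
    have hbound1 : ‖A w - A η‖ ≤ δ + ‖A uel‖ / t := by
      rw [hgap, norm_neg]
      have h1 : A ax₁ = A d + A x₂ := by
        have : A d = A ax₁ - A x₂ := LinearPMap.map_sub _ _ _
        rw [this]; abel
      have h2 : ‖A x₂‖ ≤ ‖A uel‖ / t := by
        rw [← hax₂coe, le_div_iff₀ ht]
        calc ‖(ax₂ : H)‖ * t = t * ‖(ax₂ : H)‖ := mul_comm _ _
        _ ≤ ‖A uel‖ := hb2'
      calc ‖A ax₁‖ ≤ ‖A d‖ + ‖A x₂‖ := h1 ▸ norm_add_le _ _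
      _ ≤ δ + ‖A uel‖ / t := add_le_add hdnorm h2
    have hbound2 : ‖(w : H) - (η : H)‖ ≤ ‖A η‖ / t := by
      rw [hwgap, norm_neg, hAx₁]
      rw [le_div_iff₀ ht]
      calc ‖(ax₁ : H)‖ * t = t * ‖(ax₁ : H)‖ := mul_comm _ _
      _ ≤ ‖A η‖ := hb2
    -- put together
    have hsplit : ⟪A η, v⟫ - ⟪(η : H), z⟫ = ⟪A η - A w, v⟫ + ⟪(w : H) - (η : H), z⟫ := by
      rw [inner_sub_left, inner_sub_left, hQ]; ring
    rw [hsplit]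
    have e1 : ‖⟪A η - A w, v⟫‖ ≤ (δ + ‖A uel‖ / t) * ‖v‖ := by
      calc ‖⟪A η - A w, v⟫‖ ≤ ‖A η - A w‖ * ‖v‖ := norm_inner_le_norm _ _
      _ ≤ (δ + ‖A uel‖ / t) * ‖v‖ := by
          have : ‖A η - A w‖ = ‖A w - A η‖ := by rw [norm_sub_rev]
          rw [this]
          exact mul_le_mul_of_nonneg_right hbound1 (norm_nonneg v)
    have e2 : ‖⟪(w : H) - (η : H), z⟫‖ ≤ (‖A η‖ / t) * ‖z‖ := by
      calc ‖⟪(w : H) - (η : H), z⟫‖ ≤ ‖(w : H) - (η : H)‖ * ‖z‖ := norm_inner_le_norm _ _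
      _ ≤ (‖A η‖ / t) * ‖z‖ := mul_le_mul_of_nonneg_right hbound2 (norm_nonneg z)
    have hδv : δ * ‖v‖ ≤ ε / 2 := by
      rw [hδdef]
      exact aux_delta ε ‖v‖ hε (norm_nonneg v)
    have htK : (‖A uel‖ * ‖v‖ + ‖A η‖ * ‖z‖) / t ≤ ε / 2 := by
      have hK : 0 ≤ ‖A uel‖ * ‖v‖ + ‖A η‖ * ‖z‖ := by positivity
      have h2 : (‖A uel‖ * ‖v‖ + ‖A η‖ * ‖z‖) * (2 / ε) < t :=
        lt_of_le_of_lt (le_max_right _ _) hn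
      exact aux_div _ t ε hK ht hε h2
    calc ‖⟪A η - A w, v⟫ + ⟪(w : H) - (η : H), z⟫‖
        ≤ ‖⟪A η - A w, v⟫‖ + ‖⟪(w : H) - (η : H), z⟫‖ := norm_add_le _ _
      _ ≤ (δ + ‖A uel‖ / t) * ‖v‖ + (‖A η‖ / t) * ‖z‖ := add_le_add e1 e2
      _ = δ * ‖v‖ + (‖A uel‖ * ‖v‖ + ‖A η‖ * ‖z‖) / t := by ring
      _ ≤ ε / 2 + ε / 2 := add_le_add hδv htK
      _ = ε := by ring
  have h0 : ‖⟪A η, v⟫ - ⟪(η : H), z⟫‖ ≤ 0 :=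
    le_of_forall_pos_le_add fun ε hε => by simpa using key ε hε
  have := norm_le_zero_iff.mp h0
  exact sub_eq_zero.mp this


theorem star_inner_left (V : H →L[ℂ] H) (x y : H) : ⟪(star V) x, y⟫ = ⟪x, V y⟫ := by
  rw [ContinuousLinearMap.star_eq_adjoint, ContinuousLinearMap.adjoint_inner_left]

theorem star_inner_right (V : H →L[ℂ] H) (x y : H) : ⟪x, (star V) y⟫ = ⟪V x, y⟫ := by
  rw [ContinuousLinearMap.star_eq_adjoint, ContinuousLinearMap.adjoint_inner_right]

/-- If `V` is of class `C¹(A)` with commutator `B`, then `V` maps `D(A)` into itself and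
`A(Vψ) = V(Aψ) + Bψ`. -/
theorem move (hdense : Dense (A.domain : Set H)) (hsa : A.adjoint = A) {V B : H →L[ℂ] H}
    (hB : ∀ φ ψ : A.domain, ⟪A φ, V (ψ : H)⟫ - ⟪(φ : H), V (A ψ)⟫ = ⟪(φ : H), B (ψ : H)⟫)
    (ψ : A.domain) :
    ∃ h : V (ψ : H) ∈ A.domain, A ⟨V (ψ : H), h⟩ = V (A ψ) + B (ψ : H) := by
  apply mem_apply hdense hsa
  intro x
  rw [inner_add_right]
  linear_combination hB x ψ

/-- The commutator identity for `star V`. -/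
theorem hBstar {V B : H →L[ℂ] H}
    (hB : ∀ φ ψ : A.domain, ⟪A φ, V (ψ : H)⟫ - ⟪(φ : H), V (A ψ)⟫ = ⟪(φ : H), B (ψ : H)⟫) :
    ∀ φ ψ : A.domain, ⟪A φ, (star V) (ψ : H)⟫ - ⟪(φ : H), (star V) (A ψ)⟫ =
      ⟪(φ : H), (-(star B)) (ψ : H)⟫ := by
  intro φ ψ
  have h1 : ⟪V (φ : H), A ψ⟫ - ⟪V (A φ), (ψ : H)⟫ = ⟪B (φ : H), (ψ : H)⟫ := by
    have h := congrArg (starRingEnd ℂ) (hB ψ φ)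
    simpa [map_sub, inner_conj_symm] using h
  rw [star_inner_right, star_inner_right, ContinuousLinearMap.neg_apply, inner_neg_right,
    star_inner_right]
  linear_combination -h1

/-- The `C¹(A²)` commutator identity for `star V`. -/
theorem hB2star {V B2 : H →L[ℂ] H}
    (hB2 : ∀ (φ ψ : A.domain) (hφ : A φ ∈ A.domain) (hψ : A ψ ∈ A.domain),
      ⟪A ⟨A φ, hφ⟩, V (ψ : H)⟫ - ⟪(φ : H), V (A ⟨A ψ, hψ⟩)⟫ = ⟪(φ : H), B2 (ψ : H)⟫) :
    ∀ (φ ψ : A.domain) (hφ : A φ ∈ A.domain) (hψ : A ψ ∈ A.domain),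
      ⟪A ⟨A φ, hφ⟩, (star V) (ψ : H)⟫ - ⟪(φ : H), (star V) (A ⟨A ψ, hψ⟩)⟫ =
        ⟪(φ : H), (-(star B2)) (ψ : H)⟫ := by
  intro φ ψ hφ hψ
  have h1 : ⟪V (φ : H), A ⟨A ψ, hψ⟩⟫ - ⟪V (A ⟨A φ, hφ⟩), (ψ : H)⟫ = ⟪B2 (φ : H), (ψ : H)⟫ := by
    have h := congrArg (starRingEnd ℂ) (hB2 ψ φ hψ hφ)
    simpa [map_sub, inner_conj_symm] using h
  rw [star_inner_right, star_inner_right, ContinuousLinearMap.neg_apply, inner_neg_right,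
    star_inner_right]
  linear_combination -h1

/-- `B` maps `D(A²)` into `D(A)`, with `A(Bψ) = B2ψ - B(Aψ)`. -/
theorem Bmem (hdense : Dense (A.domain : Set H)) (hsa : A.adjoint = A) {V B B2 : H →L[ℂ] H}
    (hB : ∀ φ ψ : A.domain, ⟪A φ, V (ψ : H)⟫ - ⟪(φ : H), V (A ψ)⟫ = ⟪(φ : H), B (ψ : H)⟫)
    (hB2 : ∀ (φ ψ : A.domain) (hφ : A φ ∈ A.domain) (hψ : A ψ ∈ A.domain),
      ⟪A ⟨A φ, hφ⟩, V (ψ : H)⟫ - ⟪(φ : H), V (A ⟨A ψ, hψ⟩)⟫ = ⟪(φ : H), B2 (ψ : H)⟫)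
    (ψ : A.domain) (hψ : A ψ ∈ A.domain) :
    ∃ hm : B (ψ : H) ∈ A.domain, A ⟨B (ψ : H), hm⟩ = B2 (ψ : H) - B (A ψ) := by
  apply mem_apply hdense hsa
  intro x
  refine core hdense hsa (fun χ hχ => ?_) x
  have h1 : ⟪A ⟨A χ, hχ⟩, V (ψ : H)⟫ - ⟪A χ, V (A ψ)⟫ = ⟪A χ, B (ψ : H)⟫ := hB ⟨A χ, hχ⟩ ψ
  have h2 := hB2 χ ψ hχ hψ
  have h3 : ⟪A χ, V (A ψ)⟫ - ⟪(χ : H), V (A ⟨A ψ, hψ⟩)⟫ = ⟪(χ : H), B (A ψ)⟫ := hB χ ⟨A ψ, hψ⟩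
  rw [inner_sub_right]
  linear_combination h2 - h1 - h3

/-- Key exchange identity: `⟪V(Aα), Bβ⟫ = ⟪B(Aα), Vβ⟫` for `α ∈ D(A²)`, `β ∈ D(A)`. -/
theorem swap (hdense : Dense (A.domain : Set H)) (hsa : A.adjoint = A) {V B : H →L[ℂ] H}
    (hV1 : ∀ x : H, (star V) (V x) = x)
    (hB : ∀ φ ψ : A.domain, ⟪A φ, V (ψ : H)⟫ - ⟪(φ : H), V (A ψ)⟫ = ⟪(φ : H), B (ψ : H)⟫)
    (α β : A.domain) (hα : A α ∈ A.domain) :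
    ⟪V (A α), B (β : H)⟫ = ⟪B (A α), V (β : H)⟫ := by
  have hVin : ∀ x y : H, ⟪V x, V y⟫ = ⟪x, y⟫ := fun x y => by
    rw [← star_inner_right, hV1]
  obtain ⟨hβm, hβe⟩ := move hdense hsa hB β
  obtain ⟨hαm, hαe⟩ := move hdense hsa hB ⟨A α, hα⟩
  have e1 : ⟪V (A α), A ⟨V (β : H), hβm⟩⟫ = ⟪V (A α), V (A β)⟫ + ⟪V (A α), B (β : H)⟫ := by
    rw [hβe, inner_add_right]
  have e2 : ⟪A ⟨V (A α), hαm⟩, V (β : H)⟫ =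
      ⟪V (A ⟨A α, hα⟩), V (β : H)⟫ + ⟪B (A α), V (β : H)⟫ := by
    rw [hαe, inner_add_left]
  have e3 : ⟪V (A ⟨A α, hα⟩), V (β : H)⟫ = ⟪A ⟨A α, hα⟩, (β : H)⟫ := hVin _ _
  have e4 : ⟪A ⟨A α, hα⟩, (β : H)⟫ = ⟪A α, A β⟫ := sym hdense hsa ⟨A α, hα⟩ β
  have e5 : ⟪V (A α), V (A β)⟫ = ⟪A α, A β⟫ := hVin _ _
  have e6 : ⟪A ⟨V (A α), hαm⟩, V (β : H)⟫ = ⟪V (A α), A ⟨V (β : H), hβm⟩⟫ :=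
    sym hdense hsa ⟨V (A α), hαm⟩ ⟨V (β : H), hβm⟩
  linear_combination -e1 + e2 + e3 + e4 - e5 - e6

/-- Master lemma: boundedness of the symmetrized commutator form. -/
theorem master (hdense : Dense (A.domain : Set H)) (hsa : A.adjoint = A) {V B B2 : H →L[ℂ] H}
    (hV1 : ∀ x : H, (star V) (V x) = x) (hV2 : ∀ x : H, V ((star V) x) = x)
    (hB : ∀ φ ψ : A.domain, ⟪A φ, V (ψ : H)⟫ - ⟪(φ : H), V (A ψ)⟫ = ⟪(φ : H), B (ψ : H)⟫)
    (hB2 : ∀ (φ ψ : A.domain) (hφ : A φ ∈ A.domain) (hψ : A ψ ∈ A.domain),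
      ⟪A ⟨A φ, hφ⟩, V (ψ : H)⟫ - ⟪(φ : H), V (A ⟨A ψ, hψ⟩)⟫ = ⟪(φ : H), B2 (ψ : H)⟫) :
    ∃ E : H →L[ℂ] H, ∀ φ ψ : A.domain,
      ⟪(star V) (B (φ : H)), A ψ⟫ + ⟪A φ, (star V) (B (ψ : H))⟫ = ⟪E (φ : H), (ψ : H)⟫ := by
  set D : H →L[ℂ] H := (star V).comp B2 - (star B).comp B with hD
  refine ⟨star D, fun φ ψ => ?_⟩
  -- Step C : the identity on D(A) × D(A²)
  have stepC : ∀ (φ : A.domain) (ψ : A.domain) (hψ : A ψ ∈ A.domain),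
      ⟪(star V) (B (φ : H)), A ψ⟫ + ⟪A φ, (star V) (B (ψ : H))⟫ = ⟪(φ : H), D (ψ : H)⟫ := by
    intro φ ψ hψ
    obtain ⟨hBm, hBe⟩ := Bmem hdense hsa hB hB2 ψ hψ
    obtain ⟨hsVm, hsVe⟩ := move hdense hsa (hBstar hB) ⟨B (ψ : H), hBm⟩
    -- Term 2
    have t2 : ⟪(star V) (B (φ : H)), A ψ⟫ = ⟪(φ : H), (star V) (B (A ψ))⟫ := by
      rw [star_inner_left]
      rw [← inner_conj_symm]
      rw [swap hdense hsa hV1 hB ψ φ hψ]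
      rw [inner_conj_symm]
      rw [star_inner_right]
    -- Term 1
    have t1 : ⟪A φ, (star V) (B (ψ : H))⟫ =
        ⟪(φ : H), (star V) (B2 (ψ : H)) - (star V) (B (A ψ)) - (star B) (B (ψ : H))⟫ := by
      have s1 : ⟪A φ, ((⟨(star V) (B (ψ : H)), hsVm⟩ : A.domain) : H)⟫ =
          ⟪(φ : H), A ⟨(star V) (B (ψ : H)), hsVm⟩⟫ :=
        sym hdense hsa φ ⟨(star V) (B (ψ : H)), hsVm⟩
      have s2 : A ⟨(star V) (B (ψ : H)), hsVm⟩ =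
          (star V) (B2 (ψ : H)) - (star V) (B (A ψ)) - (star B) (B (ψ : H)) := by
        rw [hsVe]
        have : A (⟨B (ψ : H), hBm⟩ : A.domain) = B2 (ψ : H) - B (A ψ) := hBe
        rw [this, ContinuousLinearMap.neg_apply, map_sub]
        abel
      rw [← s2]
      exact s1
    rw [t1, t2, ← inner_add_right]
    congr 1
    simp only [hD, ContinuousLinearMap.sub_apply, ContinuousLinearMap.comp_apply]
    abel
  -- Step D : extend to D(A) × D(A) by the core lemma
  have stepD : ⟪A ψ, (star V) (B (φ : H))⟫ =
      ⟪(ψ : H), (star D) (φ : H) - (star B) (V (A φ))⟫ := by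
    refine core hdense hsa (fun χ hχ => ?_) ψ
    have h := stepC φ χ hχ
    have hc := congrArg (starRingEnd ℂ) h
    simp only [map_add, inner_conj_symm] at hc
    rw [inner_sub_right]
    have r1 : ⟪D (χ : H), (φ : H)⟫ = ⟪(χ : H), (star D) (φ : H)⟫ := (star_inner_right _ _ _).symm
    have r2 : ⟪(star V) (B (χ : H)), A φ⟫ = ⟪(χ : H), (star B) (V (A φ))⟫ := by
      rw [star_inner_left, ← star_inner_right]
    linear_combination hc + r1 - r2
  -- conclude
  have final : ⟪(star V) (B (φ : H)), A ψ⟫ =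
      ⟪(star D) (φ : H) - (star B) (V (A φ)), (ψ : H)⟫ := by
    rw [← inner_conj_symm, stepD, inner_conj_symm]
  rw [final, inner_sub_left]
  have r3 : ⟪(star B) (V (A φ)), (ψ : H)⟫ = ⟪A φ, (star V) (B (ψ : H))⟫ := by
    rw [star_inner_left, ← star_inner_right]
  rw [r3]
  have r4 : ⟪(star D) (φ : H), (ψ : H)⟫ = ⟪(star D) (φ : H), (ψ : H)⟫ := rfl
  ring


end Stmt14Aux

open Stmt14Aux in
/-- Lemma 5.9 ("qf"): if a unitary `U` belongs to `C¹(A) ∩ C¹(A²)`, then the sesquilinear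
forms `Q₊(φ,ψ) = ⟨(U*AU−A)φ, Aψ⟩ + ⟨Aφ, (U*AU−A)ψ⟩` and
`Q₋(φ,ψ) = ⟨(A−UAU*)φ, Aψ⟩ + ⟨Aφ, (A−UAU*)ψ⟩`, defined on `D(A) × D(A)`, extend as
bounded forms on `H × H`. -/
theorem stmt14
    {H : Type*} [NormedAddCommGroup H] [InnerProductSpace ℂ H] [CompleteSpace H]
    -- A self-adjoint (densely defined) operator on H
    (A : H →ₗ.[ℂ] H) (hdense : Dense (A.domain : Set H)) (hsa : A.adjoint = A)
    -- U unitary of class C¹(A)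
    (U : H →L[ℂ] H) (hU : U ∈ unitary (H →L[ℂ] H))
    (hC1 : ∃ B : H →L[ℂ] H, ∀ φ ψ : A.domain,
      ⟪A φ, U (ψ : H)⟫ - ⟪(φ : H), U (A ψ)⟫ = ⟪(φ : H), B (ψ : H)⟫)
    -- U of class C¹(A²), with D(A²) = {ψ ∈ D(A) : Aψ ∈ D(A)}
    (hC1sq : ∃ B2 : H →L[ℂ] H, ∀ (φ ψ : A.domain)
      (hφ : A φ ∈ A.domain) (hψ : A ψ ∈ A.domain),
      ⟪A ⟨A φ, hφ⟩, U (ψ : H)⟫ - ⟪(φ : H), U (A ⟨A ψ, hψ⟩)⟫ = ⟪(φ : H), B2 (ψ : H)⟫) :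
    -- conclusion: U, U* preserve D(A) and the forms Q₊, Q₋ are bounded on D(A) × D(A)
    ∃ (hm : ∀ x ∈ A.domain, U x ∈ A.domain)
      (hm' : ∀ x ∈ A.domain, (star U) x ∈ A.domain),
      ∃ C > (0 : ℝ), ∀ φ ψ : A.domain,
        ‖⟪(star U) (A ⟨U (φ : H), hm φ φ.2⟩) - A φ, A ψ⟫ +
            ⟪A φ, (star U) (A ⟨U (ψ : H), hm ψ ψ.2⟩) - A ψ⟫‖ ≤
          C * ‖(φ : H)‖ * ‖(ψ : H)‖ ∧
        ‖⟪A φ - U (A ⟨(star U) (φ : H), hm' φ φ.2⟩), A ψ⟫ +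
            ⟪A φ, A ψ - U (A ⟨(star U) (ψ : H), hm' ψ ψ.2⟩)⟫‖ ≤
          C * ‖(φ : H)‖ * ‖(ψ : H)‖ := by
  obtain ⟨B, hB⟩ := hC1
  obtain ⟨B2, hB2⟩ := hC1sq
  have hV1 : ∀ x : H, (star U) (U x) = x := fun x => by
    have h := DFunLike.congr_fun (Unitary.mem_iff.mp hU).1 x
    simpa [ContinuousLinearMap.mul_apply, ContinuousLinearMap.one_apply] using h
  have hV2 : ∀ x : H, U ((star U) x) = x := fun x => by
    have h := DFunLike.congr_fun (Unitary.mem_iff.mp hU).2 x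
    simpa [ContinuousLinearMap.mul_apply, ContinuousLinearMap.one_apply] using h
  have hm : ∀ x ∈ A.domain, U x ∈ A.domain := fun x hx =>
    (move hdense hsa hB ⟨x, hx⟩).choose
  have hm' : ∀ x ∈ A.domain, (star U) x ∈ A.domain := fun x hx =>
    (move hdense hsa (hBstar hB) ⟨x, hx⟩).choose
  have hV1' : ∀ x : H, (star (star U)) ((star U) x) = x := fun x => by
    rw [star_star]; exact hV2 x
  have hV2' : ∀ x : H, (star U) ((star (star U)) x) = x := fun x => by
    rw [star_star]; exact hV1 x
  obtain ⟨E1, hE1⟩ := master hdense hsa hV1 hV2 hB hB2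
  obtain ⟨E2, hE2⟩ := master hdense hsa hV1' hV2' (hBstar hB) (hB2star hB2)
  set C : ℝ := ‖E1‖ + ‖E2‖ + 1 with hC
  have hCpos : 0 < C := by positivity
  have bnd : ∀ (E : H →L[ℂ] H) (x y : H), ‖E‖ ≤ C → ‖⟪E x, y⟫‖ ≤ C * ‖x‖ * ‖y‖ := by
    intro E x y hE
    calc ‖⟪E x, y⟫‖ ≤ ‖E x‖ * ‖y‖ := norm_inner_le_norm _ _
    _ ≤ (‖E‖ * ‖x‖) * ‖y‖ :=
        mul_le_mul_of_nonneg_right (E.le_opNorm x) (norm_nonneg y)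
    _ ≤ (C * ‖x‖) * ‖y‖ := by
        have := mul_le_mul_of_nonneg_right hE (norm_nonneg x)
        exact mul_le_mul_of_nonneg_right this (norm_nonneg y)
    _ = C * ‖x‖ * ‖y‖ := by ring
  refine ⟨hm, hm', C, hCpos, fun φ ψ => ⟨?_, ?_⟩⟩
  · -- Q₊
    have expr : ∀ χ : A.domain,
        (star U) (A ⟨U (χ : H), hm χ χ.2⟩) - A χ = (star U) (B (χ : H)) := by
      intro χ
      obtain ⟨hmem, heq⟩ := move hdense hsa hB χ
      have h1 : A ⟨U (χ : H), hm χ χ.2⟩ = U (A χ) + B (χ : H) := heq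
      rw [h1, map_add, hV1]
      abel
    rw [expr φ, expr ψ, hE1 φ ψ]
    exact bnd E1 _ _ (by rw [hC]; nlinarith [norm_nonneg E2])
  · -- Q₋
    have expr2 : ∀ χ : A.domain,
        A χ - U (A ⟨(star U) (χ : H), hm' χ χ.2⟩) = U ((star B) (χ : H)) := by
      intro χ
      obtain ⟨hmem, heq⟩ := move hdense hsa (hBstar hB) χ
      have h1 : A ⟨(star U) (χ : H), hm' χ χ.2⟩ = (star U) (A χ) + (-(star B)) (χ : H) := heq
      rw [h1, map_add, hV2, ContinuousLinearMap.neg_apply, map_neg]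
      abel
    have key : ⟪U ((star B) (φ : H)), A ψ⟫ + ⟪A φ, U ((star B) (ψ : H))⟫ =
        -⟪E2 (φ : H), (ψ : H)⟫ := by
      have h := hE2 φ ψ
      simp only [star_star, ContinuousLinearMap.neg_apply, map_neg, inner_neg_left,
        inner_neg_right] at h
      linear_combination -h
    rw [expr2 φ, expr2 ψ, key, norm_neg]
    exact bnd E2 _ _ (by rw [hC]; nlinarith [norm_nonneg E1])
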